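/- Deterministic estimation oracle inequality for the sg-LASSO (deterministic core of Theorem 1, second claim). Under the same hypotheses as the deterministic prediction oracle inequality — y = m + u, λ > 0, c > 1, c₀ = (c+1)/(c−1), β ≠ 0 with support S₀ and group support 𝒢₀, β̂ a minimizer of ‖y − Xb‖_T² + 2λΩ(b), dual bound |⟨u, Xb⟩|/T ≤ (λ/c)Ω(b) for all b, restricted eigenvalue Δᵀ Σ Δ ≥ γ ∑_{G∈𝒢₀}|Δ_G|₂² for all Δ ∈ 𝒞(2c₀), and every entry of XᵀX/T − Σ at most γ/(2 G* s_α (1+2c₀)²) in absolute value — the sg-LASSO estimation error satisfies Ω(β̂ − β) ≤ √( 2(1+2c₀)² (C₁ s_α λ² + 4‖m − Xβ‖_T²) s_α / γ ) + (1 + 1/(2c₀)) · (4c / ((c−1)λ)) · ‖m − Xβ‖_T², where C₁ = 4A(1+c₀)²(1 + 1/c)²/γ and A = 2(1+2c₀)²/(2(1+2c₀)² − (1+c₀)²). -/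

import Mathlib

open Finset

noncomputable section

open scoped Classical

/-- ℓ1 norm on ℝ^p. -/
def l1 {p : ℕ} (b : Fin p → ℝ) : ℝ := ∑ i, |b i|

/-- ℓ2 norm on ℝ^p. -/
def l2 {p : ℕ} (b : Fin p → ℝ) : ℝ := Real.sqrt (∑ i, (b i) ^ 2)

/-- `restr b S` keeps the coordinates of `b` on `S` and puts zeros elsewhere. -/
def restr {p : ℕ} (b : Fin p → ℝ) (S : Finset (Fin p)) : Fin p → ℝ :=
  fun i => if i ∈ S then b i else 0

/-- `G` is a partition of `{1,…,p}` into nonempty pairwise disjoint groups. -/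
def IsPartition {p : ℕ} (G : Finset (Finset (Fin p))) : Prop :=
  (∀ g ∈ G, g.Nonempty) ∧ (∀ g ∈ G, ∀ g' ∈ G, g ≠ g' → Disjoint g g') ∧
    (∀ i : Fin p, ∃ g ∈ G, i ∈ g)

/-- The sg-LASSO penalty `Ω(b) = α|b|₁ + (1−α)∑_{G∈𝒢}|b_G|₂`. -/
def sgl {p : ℕ} (α : ℝ) (G : Finset (Finset (Fin p))) (b : Fin p → ℝ) : ℝ :=
  α * l1 b + (1 - α) * ∑ g ∈ G, l2 (restr b g)

/-- Support `S₀ = {j : β_j ≠ 0}` of `β`. -/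
def supp {p : ℕ} (β : Fin p → ℝ) : Finset (Fin p) :=
  Finset.univ.filter (fun j => β j ≠ 0)

/-- Group support `𝒢₀ = {G ∈ 𝒢 : β_G ≠ 0}` of `β`. -/
def gsupp {p : ℕ} (G : Finset (Finset (Fin p))) (β : Fin p → ℝ) :
    Finset (Finset (Fin p)) :=
  G.filter (fun g => restr β g ≠ 0)

/-- `Ω₀(b) = α|b_{S₀}|₁ + (1−α)∑_{G∈𝒢₀}|b_G|₂`. -/
def sgl0 {p : ℕ} (α : ℝ) (G : Finset (Finset (Fin p))) (β b : Fin p → ℝ) : ℝ :=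
  α * l1 (restr b (supp β)) + (1 - α) * ∑ g ∈ gsupp G β, l2 (restr b g)

/-- `Ω₁(b) = α|b_{S₀ᶜ}|₁ + (1−α)∑_{G∈𝒢∖𝒢₀}|b_G|₂`. -/
def sgl1 {p : ℕ} (α : ℝ) (G : Finset (Finset (Fin p))) (β b : Fin p → ℝ) : ℝ :=
  α * l1 (restr b (supp β)ᶜ) + (1 - α) * ∑ g ∈ G \ gsupp G β, l2 (restr b g)

/-- Effective sparsity constant `s_α`, defined via
`√(s_α) = α√|S₀| + (1−α)√|𝒢₀|`. -/
def salpha {p : ℕ} (α : ℝ) (G : Finset (Finset (Fin p))) (β : Fin p → ℝ) : ℝ :=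
  (α * Real.sqrt ((supp β).card) + (1 - α) * Real.sqrt ((gsupp G β).card)) ^ 2

/-- Empirical squared norm `‖v‖_T² = |v|₂²/T`. -/
def normT2 {T : ℕ} (v : Fin T → ℝ) : ℝ := (∑ t, (v t) ^ 2) / T

/-- Empirical norm `‖v‖_T = √(|v|₂²/T)`. -/
def normT {T : ℕ} (v : Fin T → ℝ) : ℝ := Real.sqrt ((∑ t, (v t) ^ 2) / T)

namespace SgAux

variable {p : ℕ}

lemma sum_sq_nonneg (b : Fin p → ℝ) : (0:ℝ) ≤ ∑ i, (b i)^2 :=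
  Finset.sum_nonneg fun i _ => sq_nonneg _

lemma l2_nonneg (b : Fin p → ℝ) : 0 ≤ l2 b := Real.sqrt_nonneg _

lemma l1_nonneg (b : Fin p → ℝ) : 0 ≤ l1 b :=
  Finset.sum_nonneg fun i _ => abs_nonneg _

lemma l2_sq (b : Fin p → ℝ) : (l2 b)^2 = ∑ i, (b i)^2 := Real.sq_sqrt (sum_sq_nonneg b)

lemma l2_le_l1 (b : Fin p → ℝ) : l2 b ≤ l1 b := by
  have h : ∑ i, (b i)^2 ≤ (∑ i, |b i|)^2 := by
    have := Finset.sum_sq_le_sq_sum_of_nonneg (s := (univ : Finset (Fin p)))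
      (f := fun i => |b i|) (fun i _ => abs_nonneg _)
    simpa [sq_abs] using this
  calc l2 b ≤ Real.sqrt ((∑ i, |b i|)^2) := Real.sqrt_le_sqrt h
  _ = l1 b := Real.sqrt_sq (l1_nonneg b)

lemma sum_mul_le_sqrt (x y : Fin p → ℝ) :
    ∑ i, x i * y i ≤ Real.sqrt (∑ i, (x i)^2) * Real.sqrt (∑ i, (y i)^2) := by
  have cs : (∑ i, x i * y i)^2 ≤ (∑ i, (x i)^2) * (∑ i, (y i)^2) :=
    Finset.sum_mul_sq_le_sq_mul_sq univ x y
  have hprod : Real.sqrt ((∑ i, (x i)^2) * (∑ i, (y i)^2))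
      = Real.sqrt (∑ i, (x i)^2) * Real.sqrt (∑ i, (y i)^2) :=
    Real.sqrt_mul (sum_sq_nonneg x) _
  rcases le_or_gt (∑ i, x i * y i) 0 with h | h
  · exact h.trans (by rw [← hprod]; exact Real.sqrt_nonneg _)
  · rw [← hprod]
    exact (Real.le_sqrt h.le (by positivity)).2 cs

lemma l2_add_le (x y : Fin p → ℝ) : l2 (x + y) ≤ l2 x + l2 y := by
  have hxy := sum_mul_le_sqrt x y
  have key : ∑ i, ((x + y) i)^2 ≤ (l2 x + l2 y)^2 := by
    have e1 : ∑ i, ((x + y) i)^2 = (∑ i, (x i)^2) + 2*(∑ i, x i * y i) + ∑ i, (y i)^2 := by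
      simp only [Pi.add_apply]
      rw [Finset.mul_sum, ← Finset.sum_add_distrib, ← Finset.sum_add_distrib]
      exact Finset.sum_congr rfl fun i _ => by ring
    have e2 : (l2 x + l2 y)^2 = (∑ i, (x i)^2) + 2*(l2 x * l2 y) + ∑ i, (y i)^2 := by
      have := l2_sq x; have := l2_sq y; nlinarith [l2_sq x, l2_sq y]
    have : l2 x * l2 y = Real.sqrt (∑ i, (x i)^2) * Real.sqrt (∑ i, (y i)^2) := rfl
    rw [e1, e2, this]; linarith
  calc l2 (x + y) ≤ Real.sqrt ((l2 x + l2 y)^2) := Real.sqrt_le_sqrt key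
  _ = l2 x + l2 y := Real.sqrt_sq (add_nonneg (l2_nonneg x) (l2_nonneg y))

lemma restr_add (b d : Fin p → ℝ) (S : Finset (Fin p)) :
    restr (b + d) S = restr b S + restr d S := by
  funext i; by_cases h : i ∈ S <;> simp [restr, h]

lemma restr_neg (b : Fin p → ℝ) (S : Finset (Fin p)) :
    restr (-b) S = -(restr b S) := by
  funext i; by_cases h : i ∈ S <;> simp [restr, h]

lemma l1_neg (b : Fin p → ℝ) : l1 (-b) = l1 b := by simp [l1]

lemma l2_neg (b : Fin p → ℝ) : l2 (-b) = l2 b := by simp [l2]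

lemma l1_restr (b : Fin p → ℝ) (S : Finset (Fin p)) :
    l1 (restr b S) = ∑ i ∈ S, |b i| := by
  unfold l1 restr
  rw [← Finset.sum_filter_add_sum_filter_not univ (fun i => i ∈ S)]
  have h1 : ∀ i ∈ univ.filter (fun i => i ∈ S), |if i ∈ S then b i else 0| = |b i| := by
    intro i hi; simp at hi; simp [hi]
  have h2 : ∀ i ∈ univ.filter (fun i => ¬ i ∈ S), |if i ∈ S then b i else 0| = 0 := by
    intro i hi; simp at hi; simp [hi]
  rw [Finset.sum_congr rfl h1, Finset.sum_congr rfl h2, Finset.sum_const_zero, add_zero]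
  congr 1; ext i; simp

lemma l2_restr (b : Fin p → ℝ) (S : Finset (Fin p)) :
    l2 (restr b S) = Real.sqrt (∑ i ∈ S, (b i)^2) := by
  unfold l2 restr
  congr 1
  rw [← Finset.sum_filter_add_sum_filter_not univ (fun i => i ∈ S)]
  have h1 : ∀ i ∈ univ.filter (fun i => i ∈ S), (if i ∈ S then b i else 0)^2 = (b i)^2 := by
    intro i hi; simp at hi; simp [hi]
  have h2 : ∀ i ∈ univ.filter (fun i => ¬ i ∈ S), (if i ∈ S then b i else 0)^2 = 0 := by
    intro i hi; simp at hi; simp [hi]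
  rw [Finset.sum_congr rfl h1, Finset.sum_congr rfl h2, Finset.sum_const_zero, add_zero]
  congr 1; ext i; simp

lemma l2_restr_sq (b : Fin p → ℝ) (S : Finset (Fin p)) :
    (l2 (restr b S))^2 = ∑ i ∈ S, (b i)^2 := by
  rw [l2_restr]
  exact Real.sq_sqrt (Finset.sum_nonneg fun i _ => sq_nonneg _)

lemma l1_restr_le (b : Fin p → ℝ) (S : Finset (Fin p)) :
    l1 (restr b S) ≤ Real.sqrt (S.card) * l2 (restr b S) := by
  have h : (∑ i ∈ S, |b i|)^2 ≤ (S.card : ℝ) * ∑ i ∈ S, (b i)^2 := by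
    have := sq_sum_le_card_mul_sum_sq (s := S) (f := fun i => |b i|)
    simpa [sq_abs] using this
  rw [l1_restr, l2_restr]
  have hnn : (0:ℝ) ≤ ∑ i ∈ S, |b i| := Finset.sum_nonneg fun i _ => abs_nonneg _
  have hs : (0:ℝ) ≤ ∑ i ∈ S, (b i)^2 := Finset.sum_nonneg fun i _ => sq_nonneg _
  calc ∑ i ∈ S, |b i| ≤ Real.sqrt ((S.card : ℝ) * ∑ i ∈ S, (b i)^2) :=
        (Real.le_sqrt hnn (by positivity)).2 h
  _ = Real.sqrt (S.card) * Real.sqrt (∑ i ∈ S, (b i)^2) := Real.sqrt_mul (by positivity) _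

end SgAux

namespace SgAux

variable {p : ℕ} {α : ℝ} {G : Finset (Finset (Fin p))} {β : Fin p → ℝ}

lemma sgl0_nonneg (hα0 : 0 ≤ α) (hα1 : α ≤ 1) (b : Fin p → ℝ) :
    0 ≤ sgl0 α G β b := by
  have h1 := l1_nonneg (restr b (supp β))
  have h2 : (0:ℝ) ≤ ∑ g ∈ gsupp G β, l2 (restr b g) :=
    Finset.sum_nonneg fun g _ => l2_nonneg _
  have : (0:ℝ) ≤ 1 - α := by linarith
  unfold sgl0; positivity

lemma sgl1_nonneg (hα0 : 0 ≤ α) (hα1 : α ≤ 1) (b : Fin p → ℝ) :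
    0 ≤ sgl1 α G β b := by
  have h1 := l1_nonneg (restr b (supp β)ᶜ)
  have h2 : (0:ℝ) ≤ ∑ g ∈ G \ gsupp G β, l2 (restr b g) :=
    Finset.sum_nonneg fun g _ => l2_nonneg _
  have : (0:ℝ) ≤ 1 - α := by linarith
  unfold sgl1; positivity

lemma sgl_split (b : Fin p → ℝ) :
    sgl α G b = sgl0 α G β b + sgl1 α G β b := by
  unfold sgl sgl0 sgl1
  have h1 : l1 b = l1 (restr b (supp β)) + l1 (restr b (supp β)ᶜ) := by
    unfold l1
    rw [← Finset.sum_add_distrib]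
    refine Finset.sum_congr rfl fun i _ => ?_
    by_cases h : i ∈ supp β <;> simp [restr, h]
  have h2 : ∑ g ∈ G, l2 (restr b g) =
      (∑ g ∈ gsupp G β, l2 (restr b g)) + ∑ g ∈ G \ gsupp G β, l2 (restr b g) := by
    rw [add_comm]
    exact (Finset.sum_sdiff (Finset.filter_subset _ _)).symm
  rw [h1, h2]; ring

lemma sgl0_add_le (hα0 : 0 ≤ α) (hα1 : α ≤ 1) (x y : Fin p → ℝ) :
    sgl0 α G β (x + y) ≤ sgl0 α G β x + sgl0 α G β y := by
  unfold sgl0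
  have h1 : l1 (restr (x + y) (supp β)) ≤ l1 (restr x (supp β)) + l1 (restr y (supp β)) := by
    rw [restr_add]
    unfold l1
    rw [← Finset.sum_add_distrib]
    exact Finset.sum_le_sum fun i _ => abs_add_le _ _
  have h2 : ∑ g ∈ gsupp G β, l2 (restr (x + y) g) ≤
      (∑ g ∈ gsupp G β, l2 (restr x g)) + ∑ g ∈ gsupp G β, l2 (restr y g) := by
    rw [← Finset.sum_add_distrib]
    refine Finset.sum_le_sum fun g _ => ?_
    rw [restr_add]; exact l2_add_le _ _
  have hα' : (0:ℝ) ≤ 1 - α := by linarith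
  nlinarith [mul_le_mul_of_nonneg_left h1 hα0, mul_le_mul_of_nonneg_left h2 hα']

lemma sgl0_neg (x : Fin p → ℝ) : sgl0 α G β (-x) = sgl0 α G β x := by
  unfold sgl0
  congr 1
  · rw [restr_neg, l1_neg]
  · congr 1; exact Finset.sum_congr rfl fun g _ => by rw [restr_neg, l2_neg]

lemma restr_zero_of_compl_supp : restr β (supp β)ᶜ = 0 := by
  funext i
  by_cases h : i ∈ (supp β)ᶜ
  · have : ¬ β i ≠ 0 := by
      intro hne
      exact (Finset.mem_compl.1 h) (by simp [supp, hne])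
    simp [restr, h, not_not.1 this]
  · simp [restr, h]

lemma restr_zero_of_not_gsupp {g : Finset (Fin p)} (hg : g ∈ G \ gsupp G β) :
    restr β g = 0 := by
  rcases Finset.mem_sdiff.1 hg with ⟨hgG, hng⟩
  by_contra hne
  exact hng (Finset.mem_filter.2 ⟨hgG, hne⟩)

lemma sgl1_self : sgl1 α G β β = 0 := by
  unfold sgl1
  rw [restr_zero_of_compl_supp]
  have h2 : ∀ g ∈ G \ gsupp G β, l2 (restr β g) = 0 := by
    intro g hg; rw [restr_zero_of_not_gsupp hg]; simp [l2]
  rw [Finset.sum_congr rfl h2, Finset.sum_const_zero]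
  simp [l1]

lemma sgl1_shift (bh : Fin p → ℝ) : sgl1 α G β bh = sgl1 α G β (bh - β) := by
  unfold sgl1
  have e : bh - β + β = bh := by ring
  have h1 : restr bh (supp β)ᶜ = restr (bh - β) (supp β)ᶜ := by
    rw [← e, restr_add, restr_zero_of_compl_supp, add_zero, e]
  have h2 : ∀ g ∈ G \ gsupp G β, restr bh g = restr (bh - β) g := by
    intro g hg
    rw [← e, restr_add, restr_zero_of_not_gsupp hg, add_zero, e]
  rw [h1]
  congr 1
  congr 1
  exact Finset.sum_congr rfl fun g hg => by rw [h2 g hg]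

lemma pairwiseDisjoint_of_partition (hG : IsPartition G) :
    Set.PairwiseDisjoint (↑G : Set (Finset (Fin p))) id :=
  fun g hg g' hg' hne => hG.2.1 g hg g' hg' hne

lemma univ_eq_biUnion (hG : IsPartition G) :
    (univ : Finset (Fin p)) = G.biUnion id := by
  ext i
  simp only [mem_univ, true_iff, Finset.mem_biUnion, id]
  exact hG.2.2 i

lemma sum_over_groups (hG : IsPartition G) (f : Fin p → ℝ) :
    ∑ i, f i = ∑ g ∈ G, ∑ i ∈ g, f i := by
  rw [univ_eq_biUnion hG]
  exact Finset.sum_biUnion (pairwiseDisjoint_of_partition hG)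

end SgAux

namespace SgAux

lemma one_le_combo {α x y : ℝ} (hα0 : 0 ≤ α) (hα1 : α ≤ 1) (hx : 1 ≤ x) (hy : 1 ≤ y) :
    1 ≤ (α*x + (1-α)*y)^2 := by
  have h1 : 1 ≤ α*x + (1-α)*y := by
    nlinarith [mul_nonneg hα0 (by linarith : (0:ℝ) ≤ x - 1),
      mul_nonneg (by linarith : (0:ℝ) ≤ 1 - α) (by linarith : (0:ℝ) ≤ y - 1)]
  nlinarith [h1, sq_nonneg (α*x + (1-α)*y - 1)]

lemma sq_le_of_le_of_nonneg {x y : ℝ} (hx : 0 ≤ x) (hxy : x ≤ y) : x^2 ≤ y^2 := by nlinarith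

lemma le_of_sq_le_sq {x y : ℝ} (hy : 0 ≤ y) (hsq : x^2 ≤ y^2) : x ≤ y := by
  calc x ≤ |x| := le_abs_self x
  _ = Real.sqrt (x^2) := (Real.sqrt_sq_eq_abs x).symm
  _ ≤ Real.sqrt (y^2) := Real.sqrt_le_sqrt hsq
  _ = y := Real.sqrt_sq hy

lemma cert_quad {γ w B Gq : ℝ} (hγ : 0 ≤ γ) (hq : γ*w^2 ≤ 8*B + 8*Gq*w) :
    γ^2*w^2 ≤ 64*Gq^2 + 16*γ*B := by
  linarith [mul_le_mul_of_nonneg_left hq hγ, sq_nonneg (γ*w - 8*Gq)]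

lemma hA8_fact {c0 A : ℝ} (hc0gt : 1 < c0)
    (hA : A = 2 * (1 + 2 * c0) ^ 2 / (2 * (1 + 2 * c0) ^ 2 - (1 + c0) ^ 2)) :
    8 ≤ A * (1+2*c0)^2 := by
  have hden : 0 < 2*(1+2*c0)^2 - (1+c0)^2 := by nlinarith
  rw [hA, div_mul_eq_mul_div, le_div_iff₀ hden]
  nlinarith [sq_nonneg (c0-1), sq_nonneg c0, sq_nonneg (c0+1), sq_nonneg (c0^2-1)]

lemma h2XY_fact {c0 : ℝ} (hc0gt : 1 < c0) : 2*(1+c0)^2 ≤ (1+2*c0)^2 := by nlinarith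

end SgAux

set_option maxHeartbeats 1600000 in
open SgAux in
/-- deterministic estimation oracle inequality for the sg-LASSO
(deterministic core of Theorem 1, second claim):
`Ω(β̂ − β) ≤ √(2(1+2c₀)²(C₁s_αλ² + 4‖m−Xβ‖_T²)s_α/γ)
  + (1 + 1/(2c₀))·(4c/((c−1)λ))·‖m−Xβ‖_T²`,
with `C₁ = 4A(1+c₀)²(1+1/c)²/γ` and `A = 2(1+2c₀)²/(2(1+2c₀)² − (1+c₀)²)`. -/
theorem sgLasso_estimation_oracle
    (p T : ℕ) (hp : 1 ≤ p) (hT : 1 ≤ T)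
    (α : ℝ) (hα0 : 0 ≤ α) (hα1 : α ≤ 1)
    (G : Finset (Finset (Fin p))) (hG : IsPartition G)
    (X : Matrix (Fin T) (Fin p) ℝ) (m u : Fin T → ℝ)
    (lam c c0 : ℝ) (hlam : 0 < lam) (hc : 1 < c) (hc0 : c0 = (c + 1) / (c - 1))
    (β : Fin p → ℝ) (hβ : β ≠ 0) (βhat : Fin p → ℝ)
    (hmin : ∀ b : Fin p → ℝ,
      normT2 (m + u - X.mulVec βhat) + 2 * lam * sgl α G βhat ≤
        normT2 (m + u - X.mulVec b) + 2 * lam * sgl α G b)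
    (hdual : ∀ b : Fin p → ℝ,
      |∑ t, u t * X.mulVec b t| / T ≤ (lam / c) * sgl α G b)
    (Sig : Matrix (Fin p) (Fin p) ℝ) (hsym : ∀ j k, Sig j k = Sig k j)
    (γ : ℝ) (hγ : 0 < γ)
    (hRE : ∀ Δ : Fin p → ℝ, sgl1 α G β Δ ≤ (2 * c0) * sgl0 α G β Δ →
      γ * ∑ g ∈ gsupp G β, (l2 (restr Δ g)) ^ 2 ≤ ∑ j, ∑ k, Δ j * Sig j k * Δ k)
    (hconc : ∀ j k, |(∑ t, X t j * X t k) / T - Sig j k| ≤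
      γ / (2 * ((G.sup Finset.card : ℕ) : ℝ) * salpha α G β * (1 + 2 * c0) ^ 2))
    (A C1 : ℝ)
    (hA : A = 2 * (1 + 2 * c0) ^ 2 / (2 * (1 + 2 * c0) ^ 2 - (1 + c0) ^ 2))
    (hC1 : C1 = 4 * A * (1 + c0) ^ 2 * (1 + 1 / c) ^ 2 / γ) :
    sgl α G (βhat - β) ≤
      Real.sqrt (2 * (1 + 2 * c0) ^ 2 *
          (C1 * salpha α G β * lam ^ 2 + 4 * normT (m - X.mulVec β) ^ 2) *
            salpha α G β / γ) +
        (1 + 1 / (2 * c0)) * (4 * c / ((c - 1) * lam)) *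
          normT (m - X.mulVec β) ^ 2 := by
  
  have hcpos : (0:ℝ) < c := by linarith
  have hcm : (0:ℝ) < c - 1 := by linarith
  have hc0gt : (1:ℝ) < c0 := by
    rw [hc0, lt_div_iff₀ hcm]; linarith
  have hc0pos : (0:ℝ) < c0 := by linarith
  have hTpos : (0:ℝ) < (T:ℝ) := by
    have h0T : 0 < T := by omega
    exact_mod_cast h0T
  set Δ : Fin p → ℝ := βhat - β with hΔdef
  set v : Fin T → ℝ := m - X.mulVec β with hvdef
  set e : Fin T → ℝ := X.mulVec Δ with hedef
  set s := salpha α G β with hsdef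
  set Gs := ((G.sup Finset.card : ℕ) : ℝ) with hGsdef
  set ω0 : ℝ := sgl0 α G β Δ with hw0def
  set ω1 : ℝ := sgl1 α G β Δ with hw1def
  have hω0 : 0 ≤ ω0 := sgl0_nonneg hα0 hα1 _
  have hω1 : 0 ≤ ω1 := sgl1_nonneg hα0 hα1 _
  set h := normT v with hhdef
  set a := normT e with hadef
  have hh0 : 0 ≤ h := Real.sqrt_nonneg _
  have ha0 : 0 ≤ a := Real.sqrt_nonneg _
  have hh2 : 0 ≤ h^2 := sq_nonneg _
  set a2 := normT2 e with ha2def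
  have ha2 : a ^ 2 = a2 := by
    rw [hadef, ha2def]
    exact Real.sq_sqrt (div_nonneg (sum_sq_nonneg _) hTpos.le)
  have ha2nn : 0 ≤ a2 := by rw [← ha2]; exact sq_nonneg _
  have hΩ : sgl α G Δ = ω0 + ω1 := sgl_split Δ
  have hcne : c ≠ 0 := ne_of_gt hcpos
  have hlamne : lam ≠ 0 := ne_of_gt hlam
  have hcm1 : c - 1 ≠ 0 := ne_of_gt hcm
  have hcp1 : c + 1 ≠ 0 := by intro h0; linarith [h0]
  have hγne : γ ≠ 0 := ne_of_gt hγ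
  clear_value Δ v e s Gs ω0 ω1 h a a2
  -- effective sparsity bounds
  have hs1 : 1 ≤ s := by
    obtain ⟨j, hj⟩ := Function.ne_iff.mp hβ
    have hj' : β j ≠ 0 := by simpa using hj
    have hjsupp : j ∈ supp β := by simp [supp, hj']
    obtain ⟨g, hgG, hjg⟩ := hG.2.2 j
    have hggsupp : g ∈ gsupp G β := by
      refine Finset.mem_filter.2 ⟨hgG, ?_⟩
      intro h0
      have h0j := congrFun h0 j
      simp [restr, hjg] at h0j
      exact hj' h0j
    have hcard1 : (1:ℝ) ≤ ((supp β).card : ℝ) := by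
      exact_mod_cast Finset.card_pos.2 ⟨j, hjsupp⟩
    have hcard2 : (1:ℝ) ≤ ((gsupp G β).card : ℝ) := by
      exact_mod_cast Finset.card_pos.2 ⟨g, hggsupp⟩
    have hsq1 : 1 ≤ Real.sqrt ((supp β).card) := Real.one_le_sqrt.2 hcard1
    have hsq2 : 1 ≤ Real.sqrt ((gsupp G β).card) := Real.one_le_sqrt.2 hcard2
    rw [hsdef]; unfold salpha
    exact one_le_combo hα0 hα1 hsq1 hsq2
  have hGs1 : 1 ≤ Gs := by
    obtain ⟨g0, hg0G, hi0⟩ := hG.2.2 ⟨0, by omega⟩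
    have h1 : 1 ≤ g0.card := Finset.card_pos.2 ⟨_, hi0⟩
    have h2 : 1 ≤ G.sup Finset.card := le_trans h1 (Finset.le_sup hg0G)
    rw [hGsdef]; exact_mod_cast h2
  have hspos : 0 < s := by linarith
  have hGspos : 0 < Gs := by linarith
  -- Block A : basic inequality
  have hKey : c * a2 + 4*lam*(c-1)*ω1 ≤ 4*c*h^2 + 4*lam*(c+1)*ω0 := by
    have hmin' := hmin β
    have hfun1 : m + u - X.mulVec βhat = fun t => (v t + u t) - e t := by
      funext t
      simp only [hvdef, hedef, hΔdef, Matrix.mulVec_sub, Pi.add_apply, Pi.sub_apply]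
      ring
    have hfun2 : m + u - X.mulVec β = fun t => v t + u t := by
      funext t
      simp only [hvdef, Pi.add_apply, Pi.sub_apply]
      ring
    have hexp : normT2 (fun t => (v t + u t) - e t)
        = normT2 (fun t => v t + u t) - 2*((∑ t, (v t + u t) * e t)/T) + a2 := by
      rw [ha2def]; unfold normT2
      have hsum : ∑ t, ((v t + u t) - e t)^2
          = (∑ t, (v t + u t)^2) - 2*(∑ t, (v t + u t) * e t) + ∑ t, (e t)^2 := by
        rw [Finset.mul_sum, ← Finset.sum_sub_distrib, ← Finset.sum_add_distrib]
        exact Finset.sum_congr rfl fun t _ => by ring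
      rw [hsum]; ring
    rw [hfun1, hfun2, hexp] at hmin'
    have hstart : a2 ≤ 2*((∑ t, (v t + u t) * e t)/T)
        + 2*lam*(sgl α G β - sgl α G βhat) := by linarith
    have hsplit2 : (∑ t, (v t + u t) * e t)/T = (∑ t, v t * e t)/T + (∑ t, u t * e t)/T := by
      rw [← add_div]
      congr 1
      rw [← Finset.sum_add_distrib]
      exact Finset.sum_congr rfl fun t _ => by ring
    have hΩdiff : sgl α G β - sgl α G βhat ≤ ω0 - ω1 := by
      have h1 : sgl α G β = sgl0 α G β β := by
        rw [sgl_split (β := β) β, sgl1_self, add_zero]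
      have h2 : sgl α G βhat = sgl0 α G β βhat + ω1 := by
        rw [sgl_split (β := β) βhat, hw1def, hΔdef, ← sgl1_shift]
      have h3 : sgl0 α G β β ≤ sgl0 α G β βhat + ω0 := by
        have e1 : βhat + -Δ = β := by rw [hΔdef]; ring
        calc sgl0 α G β β = sgl0 α G β (βhat + -Δ) := by rw [e1]
        _ ≤ sgl0 α G β βhat + sgl0 α G β (-Δ) := sgl0_add_le hα0 hα1 _ _
        _ = sgl0 α G β βhat + ω0 := by rw [sgl0_neg, ← hw0def]
      linarith
    have hue : (∑ t, u t * e t)/T ≤ (lam/c) * (ω0 + ω1) := by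
      have hd := hdual Δ
      rw [← hedef, hΩ] at hd
      calc (∑ t, u t * e t)/T ≤ |∑ t, u t * e t|/T :=
            (div_le_div_iff_of_pos_right hTpos).2 (le_abs_self _)
      _ ≤ (lam/c) * (ω0+ω1) := hd
    have hve : (∑ t, v t * e t)/T ≤ h * a := by
      have key := Finset.sum_mul_sq_le_sq_mul_sq univ v e
      have hh2' : h^2 = (∑ t, (v t)^2)/T := by
        rw [hhdef]; exact Real.sq_sqrt (div_nonneg (sum_sq_nonneg _) hTpos.le)
      have ha2' : a^2 = (∑ t, (e t)^2)/T := by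
        rw [hadef]; exact Real.sq_sqrt (div_nonneg (sum_sq_nonneg _) hTpos.le)
      have hT2 : (0:ℝ) < (T:ℝ)^2 := pow_pos hTpos 2
      have hsq : ((∑ t, v t * e t)/T)^2 ≤ (h*a)^2 := by
        calc ((∑ t, v t * e t)/T)^2 = (∑ t, v t * e t)^2/(T:ℝ)^2 := by rw [div_pow]
        _ ≤ ((∑ t, (v t)^2) * ∑ t, (e t)^2)/(T:ℝ)^2 := (div_le_div_iff_of_pos_right hT2).2 key
        _ = (h*a)^2 := by rw [mul_pow, hh2', ha2', div_mul_div_comm, ← pow_two]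
      exact le_of_sq_le_sq (mul_nonneg hh0 ha0) hsq
    have hbase : a2 ≤ 2*(h*a) + 2*((lam/c)*(ω0+ω1)) + 2*lam*(ω0 - ω1) := by
      rw [hsplit2] at hstart
      linarith [mul_le_mul_of_nonneg_left hΩdiff (by linarith : (0:ℝ) ≤ 2*lam), hve, hue, hstart]
    have hha : 2*(h*a) ≤ a2/2 + 2*h^2 := by linarith [sq_nonneg (a - 2*h), ha2]
    have hA2 : a2/2 ≤ 2*h^2 + 2*((lam/c)*(ω0+ω1)) + 2*lam*ω0 - 2*lam*ω1 := by linarith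
    have hmulc := mul_le_mul_of_nonneg_left hA2 hcpos.le
    have heq : c * (2*h^2 + 2*((lam/c)*(ω0+ω1)) + 2*lam*ω0 - 2*lam*ω1)
        = 2*c*h^2 + 2*lam*(ω0+ω1) + 2*c*lam*ω0 - 2*c*lam*ω1 := by
      field_simp
    rw [heq] at hmulc
    linarith
  by_cases hcase : lam * (c+1) * ω0 ≤ c * h^2
  · -- Case a
    have hsqrt0 : 0 ≤ Real.sqrt (2 * (1 + 2 * c0) ^ 2 * (C1 * s * lam ^ 2 + 4 * h ^ 2) * s / γ) :=
      Real.sqrt_nonneg _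
    have hfin : ω0 + ω1 ≤ (1 + 1 / (2 * c0)) * (4 * c / ((c - 1) * lam)) * h ^ 2 := by
      have hch2 : 0 ≤ c * h^2 := mul_nonneg hcpos.le hh2
      have hb1 : ω0 ≤ 2 * c * h^2 / ((c+1) * lam) := by
        rw [le_div_iff₀ (mul_pos (by linarith : (0:ℝ) < c+1) hlam)]
        linarith [hcase, hch2]
      have hb2 : ω1 ≤ 4 * c * h^2 / ((c-1) * lam) := by
        rw [le_div_iff₀ (mul_pos hcm hlam)]
        linarith [hKey, mul_nonneg hcpos.le ha2nn, hcase, hch2]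
      have hsplit : (1 + 1 / (2 * c0)) * (4 * c / ((c - 1) * lam)) * h ^ 2
          = 4 * c * h^2 / ((c-1) * lam) + 2 * c * h^2 / ((c+1) * lam) := by
        rw [hc0]; field_simp; ring
      rw [hsplit]; linarith
    rw [hΩ]; linarith
  · -- Case b
    push_neg at hcase
    set Nsq := ∑ g ∈ gsupp G β, (l2 (restr Δ g))^2 with hNsqdef
    have hNsq0 : 0 ≤ Nsq := Finset.sum_nonneg fun g _ => sq_nonneg _
    clear_value Nsq
    have hCSsq : ω0^2 ≤ s * Nsq := by
      have hrw : Nsq = ∑ g ∈ gsupp G β, ∑ i ∈ g, (Δ i)^2 := by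
        rw [hNsqdef]
        exact Finset.sum_congr rfl fun g _ => l2_restr_sq Δ g
      have hpd : Set.PairwiseDisjoint (↑(gsupp G β) : Set (Finset (Fin p))) id :=
        Set.PairwiseDisjoint.subset (pairwiseDisjoint_of_partition hG)
          (Finset.coe_subset.2 (Finset.filter_subset _ _))
      have hbU : ∑ g ∈ gsupp G β, ∑ i ∈ g, (Δ i)^2 = ∑ i ∈ (gsupp G β).biUnion id, (Δ i)^2 :=
        (Finset.sum_biUnion hpd).symm
      have hsub : supp β ⊆ (gsupp G β).biUnion id := by
        intro i hi
        have hi' : β i ≠ 0 := by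
          have := Finset.mem_filter.1 hi
          simpa using this.2
        obtain ⟨g, hgG, hig⟩ := hG.2.2 i
        refine Finset.mem_biUnion.2 ⟨g, ?_, hig⟩
        refine Finset.mem_filter.2 ⟨hgG, ?_⟩
        intro h0
        have h0i := congrFun h0 i
        simp [restr, hig] at h0i
        exact hi' h0i
      have hS0 : ∑ i ∈ supp β, (Δ i)^2 ≤ Nsq := by
        rw [hrw, hbU]
        exact Finset.sum_le_sum_of_subset_of_nonneg hsub fun i _ _ => sq_nonneg _
      have h1 : l1 (restr Δ (supp β)) ≤ Real.sqrt ((supp β).card) * Real.sqrt Nsq := by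
        refine (l1_restr_le Δ (supp β)).trans ?_
        refine mul_le_mul_of_nonneg_left ?_ (Real.sqrt_nonneg _)
        rw [l2_restr]
        exact Real.sqrt_le_sqrt hS0
      have h2 : ∑ g ∈ gsupp G β, l2 (restr Δ g) ≤
          Real.sqrt ((gsupp G β).card) * Real.sqrt Nsq := by
        have hsq := sq_sum_le_card_mul_sum_sq (s := gsupp G β) (f := fun g => l2 (restr Δ g))
        have hnn : 0 ≤ ∑ g ∈ gsupp G β, l2 (restr Δ g) :=
          Finset.sum_nonneg fun g _ => l2_nonneg _
        have hsq' : (∑ g ∈ gsupp G β, l2 (restr Δ g))^2 ≤ ((gsupp G β).card : ℝ) * Nsq := by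
          rw [hNsqdef]; exact_mod_cast hsq
        calc ∑ g ∈ gsupp G β, l2 (restr Δ g)
            ≤ Real.sqrt (((gsupp G β).card : ℝ) * Nsq) :=
              (Real.le_sqrt hnn (mul_nonneg (Nat.cast_nonneg _) hNsq0)).2 hsq'
        _ = _ := Real.sqrt_mul (Nat.cast_nonneg _) _
      have hle : ω0 ≤ (α * Real.sqrt ((supp β).card)
          + (1-α) * Real.sqrt ((gsupp G β).card)) * Real.sqrt Nsq := by
        rw [hw0def]; unfold sgl0
        have hα' : (0:ℝ) ≤ 1 - α := by linarith
        have m1 := mul_le_mul_of_nonneg_left h1 hα0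
        have m2 := mul_le_mul_of_nonneg_left h2 hα'
        linarith [m1, m2]
      calc ω0^2 ≤ ((α * Real.sqrt ((supp β).card)
            + (1-α) * Real.sqrt ((gsupp G β).card)) * Real.sqrt Nsq)^2 :=
          sq_le_of_le_of_nonneg hω0 hle
      _ = s * Nsq := by
          rw [mul_pow, Real.sq_sqrt hNsq0, hsdef]
          unfold salpha
          norm_num
    have hcone : ω1 ≤ 2 * c0 * ω0 := by
      have hkk : 4*lam*(c-1)*ω1 ≤ 8*lam*(c+1)*ω0 := by
        linarith [hKey, mul_nonneg hcpos.le ha2nn, hcase]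
      have h4 : (0:ℝ) < 4*lam*(c-1) := mul_pos (by linarith : (0:ℝ) < 4*lam) hcm
      have hstep : 4*lam*(c-1)*ω1 ≤ 4*lam*(c-1)*(2*c0*ω0) := by
        calc 4*lam*(c-1)*ω1 ≤ 8*lam*(c+1)*ω0 := hkk
        _ = 4*lam*(c-1)*(2*c0*ω0) := by rw [hc0]; field_simp; ring
      exact le_of_mul_le_mul_left hstep h4
    have hQle : ∑ j, ∑ k, Δ j * Sig j k * Δ k ≤
        a2 + γ / (2 * Gs * s * (1 + 2 * c0) ^ 2) * (l1 Δ)^2 := by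
      have hQhat : ∑ j, ∑ k, Δ j * ((∑ t, X t j * X t k)/(T:ℝ)) * Δ k = a2 := by
        rw [ha2def]; unfold normT2
        have hdiv : ∑ j, ∑ k, Δ j * ((∑ t, X t j * X t k)/(T:ℝ)) * Δ k
            = (∑ j, ∑ k, Δ j * (∑ t, X t j * X t k) * Δ k)/(T:ℝ) := by
          rw [Finset.sum_div]
          refine Finset.sum_congr rfl fun j _ => ?_
          rw [Finset.sum_div]
          refine Finset.sum_congr rfl fun k _ => ?_
          ring
        rw [hdiv]
        congr 1
        have hpt : ∀ j k, Δ j * (∑ t, X t j * X t k) * Δ k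
            = ∑ t, (X t j * Δ j) * (X t k * Δ k) := by
          intro j k
          rw [Finset.mul_sum, Finset.sum_mul]
          exact Finset.sum_congr rfl fun t _ => by ring
        calc ∑ j, ∑ k, Δ j * (∑ t, X t j * X t k) * Δ k
            = ∑ j, ∑ k, ∑ t, (X t j * Δ j) * (X t k * Δ k) :=
              Finset.sum_congr rfl fun j _ => Finset.sum_congr rfl fun k _ => hpt j k
        _ = ∑ j, ∑ t, ∑ k, (X t j * Δ j) * (X t k * Δ k) :=
              Finset.sum_congr rfl fun j _ => Finset.sum_comm
        _ = ∑ t, ∑ j, ∑ k, (X t j * Δ j) * (X t k * Δ k) := Finset.sum_comm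
        _ = ∑ t, (e t)^2 := by
              refine Finset.sum_congr rfl fun t _ => ?_
              have he : e t = ∑ j, X t j * Δ j := by
                rw [hedef]
                simp [Matrix.mulVec, dotProduct]
              rw [he, sq, Finset.sum_mul_sum]
      have hptwise : ∀ j k, Δ j * Sig j k * Δ k ≤
          Δ j * ((∑ t, X t j * X t k)/(T:ℝ)) * Δ k
            + |Δ j| * |Δ k| * (γ / (2 * Gs * s * (1 + 2 * c0) ^ 2)) := by
        intro j k
        have hcjk := hconc j k
        have h2 : (Δ j * Δ k) * (Sig j k - (∑ t, X t j * X t k)/(T:ℝ))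
            ≤ |Δ j| * |Δ k| * (γ / (2 * Gs * s * (1 + 2 * c0) ^ 2)) := by
          calc (Δ j * Δ k) * (Sig j k - (∑ t, X t j * X t k)/(T:ℝ))
              ≤ |(Δ j * Δ k) * (Sig j k - (∑ t, X t j * X t k)/(T:ℝ))| := le_abs_self _
          _ = |Δ j| * |Δ k| * |(∑ t, X t j * X t k)/(T:ℝ) - Sig j k| := by
              rw [abs_mul, abs_mul, ← abs_neg (Sig j k - _), neg_sub]
          _ ≤ |Δ j| * |Δ k| * (γ / (2 * Gs * s * (1 + 2 * c0) ^ 2)) := by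
              refine mul_le_mul_of_nonneg_left hcjk (mul_nonneg (abs_nonneg _) (abs_nonneg _))
        linarith [h2]
      calc ∑ j, ∑ k, Δ j * Sig j k * Δ k
          ≤ ∑ j, ∑ k, (Δ j * ((∑ t, X t j * X t k)/(T:ℝ)) * Δ k
            + |Δ j| * |Δ k| * (γ / (2 * Gs * s * (1 + 2 * c0) ^ 2))) :=
            Finset.sum_le_sum fun j _ => Finset.sum_le_sum fun k _ => hptwise j k
      _ = (∑ j, ∑ k, Δ j * ((∑ t, X t j * X t k)/(T:ℝ)) * Δ k)
            + ∑ j, ∑ k, |Δ j| * |Δ k| * (γ / (2 * Gs * s * (1 + 2 * c0) ^ 2)) := by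
            rw [← Finset.sum_add_distrib]
            exact Finset.sum_congr rfl fun j _ => Finset.sum_add_distrib
      _ ≤ a2 + γ / (2 * Gs * s * (1 + 2 * c0) ^ 2) * (l1 Δ)^2 := by
            rw [hQhat]
            refine add_le_add_right (le_of_eq ?_) a2
            have habs2 : ∑ j, ∑ k, |Δ j| * |Δ k| * (γ / (2 * Gs * s * (1 + 2 * c0) ^ 2))
                = (γ / (2 * Gs * s * (1 + 2 * c0) ^ 2)) * ((∑ j, |Δ j|) * (∑ k, |Δ k|)) := by
              rw [Finset.sum_mul_sum, Finset.mul_sum]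
              refine Finset.sum_congr rfl fun j _ => ?_
              rw [Finset.mul_sum]
              exact Finset.sum_congr rfl fun k _ => by ring
            rw [habs2]
            unfold l1
            ring
    have hL2 : (l1 Δ)^2 ≤ Gs * (sgl α G Δ)^2 := by
      have hgroups : l1 Δ = ∑ g ∈ G, l1 (restr Δ g) := by
        unfold l1
        rw [sum_over_groups hG]
        exact Finset.sum_congr rfl fun g _ => (l1_restr Δ g).symm
      have hstep : l1 Δ ≤ Real.sqrt Gs * ∑ g ∈ G, l2 (restr Δ g) := by
        rw [hgroups, Finset.mul_sum]
        refine Finset.sum_le_sum fun g hg => ?_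
        calc l1 (restr Δ g) ≤ Real.sqrt (g.card) * l2 (restr Δ g) := l1_restr_le Δ g
        _ ≤ Real.sqrt Gs * l2 (restr Δ g) := by
            refine mul_le_mul_of_nonneg_right ?_ (l2_nonneg _)
            refine Real.sqrt_le_sqrt ?_
            rw [hGsdef]
            exact_mod_cast Finset.le_sup hg
      have hsum_le : ∑ g ∈ G, l2 (restr Δ g) ≤ sgl α G Δ := by
        have hl1 : ∑ g ∈ G, l2 (restr Δ g) ≤ l1 Δ := by
          rw [hgroups]
          exact Finset.sum_le_sum fun g _ => l2_le_l1 _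
        have hsgl : sgl α G Δ = α * l1 Δ + (1-α) * ∑ g ∈ G, l2 (restr Δ g) := rfl
        rw [hsgl]
        linarith [mul_le_mul_of_nonneg_left hl1 hα0]
      have hfin2 : l1 Δ ≤ Real.sqrt Gs * sgl α G Δ :=
        hstep.trans (mul_le_mul_of_nonneg_left hsum_le (Real.sqrt_nonneg _))
      calc (l1 Δ)^2 ≤ (Real.sqrt Gs * sgl α G Δ)^2 :=
          sq_le_of_le_of_nonneg (l1_nonneg Δ) hfin2
      _ = Gs * (sgl α G Δ)^2 := by rw [mul_pow, Real.sq_sqrt hGspos.le]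
    have habs : γ * Nsq ≤ 2 * a2 := by
      have hconeS : sgl1 α G β Δ ≤ 2 * c0 * sgl0 α G β Δ := by
        rw [← hw1def, ← hw0def]; exact hcone
      have hRE' := hRE Δ hconeS
      rw [← hNsqdef] at hRE'
      have hΩb : sgl α G Δ ≤ (1 + 2*c0) * ω0 := by rw [hΩ]; linarith [hcone]
      have hΩnn : 0 ≤ sgl α G Δ := by rw [hΩ]; linarith
      have hΩsq : (sgl α G Δ)^2 ≤ (1+2*c0)^2 * ω0^2 := by
        calc (sgl α G Δ)^2 ≤ ((1+2*c0)*ω0)^2 := sq_le_of_le_of_nonneg hΩnn hΩb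
        _ = (1+2*c0)^2 * ω0^2 := by ring
      have t1 : (l1 Δ)^2 ≤ Gs * ((1+2*c0)^2 * (s*Nsq)) := by
        calc (l1 Δ)^2 ≤ Gs * (sgl α G Δ)^2 := hL2
        _ ≤ Gs * ((1+2*c0)^2 * (s*Nsq)) := by
            refine mul_le_mul_of_nonneg_left ?_ hGspos.le
            calc (sgl α G Δ)^2 ≤ (1+2*c0)^2*ω0^2 := hΩsq
            _ ≤ (1+2*c0)^2*(s*Nsq) := mul_le_mul_of_nonneg_left hCSsq (sq_nonneg _)
      have hchain : γ * Nsq ≤ a2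
          + γ / (2 * Gs * s * (1 + 2 * c0) ^ 2) * (Gs * ((1+2*c0)^2 * (s * Nsq))) := by
        calc γ * Nsq ≤ ∑ j, ∑ k, Δ j * Sig j k * Δ k := hRE'
        _ ≤ a2 + γ / (2*Gs*s*(1+2*c0)^2) * (l1 Δ)^2 := hQle
        _ ≤ _ := by
          refine add_le_add_right (mul_le_mul_of_nonneg_left t1 ?_) a2
          exact div_nonneg hγ.le (mul_nonneg (mul_nonneg
            (by linarith : (0:ℝ) ≤ 2*Gs) hspos.le) (sq_nonneg _))
      have heq : γ / (2 * Gs * s * (1 + 2 * c0) ^ 2) * (Gs * ((1+2*c0)^2 * (s * Nsq)))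
          = γ * Nsq / 2 := by
        have hGs0 : Gs ≠ 0 := ne_of_gt hGspos
        have hs0 : s ≠ 0 := ne_of_gt hspos
        have hc00 : (1+2*c0) ≠ 0 := by positivity
        field_simp
      rw [heq] at hchain
      linarith
    have hq : γ*(c*ω0)^2 ≤ 8*(s*c^2*h^2) + 8*(s*lam*(c+1))*(c*ω0) := by
      have hω0sq : γ*ω0^2 ≤ 2*s*a2 := by
        linarith [mul_le_mul_of_nonneg_left hCSsq hγ.le,
          mul_le_mul_of_nonneg_left habs hspos.le]
      have hKey2 : c*a2 ≤ 4*c*h^2 + 4*lam*(c+1)*ω0 := by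
        linarith [hKey, mul_nonneg (mul_nonneg (by linarith : (0:ℝ) ≤ 4*lam) hcm.le) hω1]
      linarith [mul_le_mul_of_nonneg_left hω0sq (sq_nonneg c),
        mul_le_mul_of_nonneg_left hKey2
          (mul_nonneg (by linarith : (0:ℝ) ≤ 2*s) hcpos.le)]
    have hcert : γ^2*(c*ω0)^2 ≤ 64*(s*lam*(c+1))^2 + 16*γ*(s*c^2*h^2) :=
      cert_quad hγ.le hq
    have hfirst : (1 + c0) * ω0 ≤
        Real.sqrt (2 * (1 + 2 * c0) ^ 2 * (C1 * s * lam ^ 2 + 4 * h ^ 2) * s / γ) := by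
      have hA8 := hA8_fact hc0gt hA
      have h2XY := h2XY_fact hc0gt
      have hsqle : ((1+c0)*ω0)^2 ≤ 2 * (1 + 2 * c0) ^ 2 * (C1 * s * lam ^ 2 + 4 * h ^ 2) * s / γ := by
        have hc2γ2 : (0:ℝ) < c^2*γ^2 := mul_pos (pow_pos hcpos 2) (pow_pos hγ 2)
        rw [← mul_le_mul_iff_of_pos_right hc2γ2]
        have hγ0 : γ ≠ 0 := ne_of_gt hγ
        have hc0' : c ≠ 0 := ne_of_gt hcpos
        have hRHSeq : (2 * (1 + 2 * c0) ^ 2 * (C1 * s * lam ^ 2 + 4 * h ^ 2) * s / γ) * (c^2*γ^2)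
            = 8*A*(1+2*c0)^2*(1+c0)^2*(c+1)^2*lam^2*s^2 + 8*(1+2*c0)^2*s*h^2*c^2*γ := by
          rw [hC1]
          field_simp
          ring
        rw [hRHSeq]
        have hstep1 : ((1+c0)*ω0)^2*(c^2*γ^2)
            ≤ (1+c0)^2 * (64*(s*lam*(c+1))^2 + 16*γ*(s*c^2*h^2)) := by
          linarith [mul_le_mul_of_nonneg_left hcert (sq_nonneg (1+c0))]
        refine hstep1.trans ?_
        have t1 : (1+c0)^2 * (64*(s*lam*(c+1))^2)
            ≤ 8*A*(1+2*c0)^2*(1+c0)^2*(c+1)^2*lam^2*s^2 := by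
          have hnn : (0:ℝ) ≤ (1+c0)^2*(c+1)^2*lam^2*s^2 := by positivity
          linarith [mul_le_mul_of_nonneg_right hA8 hnn]
        have t2 : (1+c0)^2 * (16*γ*(s*c^2*h^2)) ≤ 8*(1+2*c0)^2*s*h^2*c^2*γ := by
          have hnn : (0:ℝ) ≤ 8*γ*s*c^2*h^2 := by positivity
          linarith [mul_le_mul_of_nonneg_right h2XY hnn]
        linarith
      have hnn : 0 ≤ (1+c0)*ω0 := mul_nonneg (by linarith : (0:ℝ) ≤ 1+c0) hω0
      exact (Real.le_sqrt hnn ((sq_nonneg _).trans hsqle)).2 hsqle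
    have hlast : ω1 ≤ c0 * ω0 + c * h^2 / ((c-1)*lam) := by
      have hgoal : ω1 * ((c-1)*lam) ≤ c0*ω0*((c-1)*lam) + c*h^2 := by
        have he : c0*ω0*((c-1)*lam) = lam*(c+1)*ω0 := by rw [hc0]; field_simp
        rw [he]; linarith [hKey, mul_nonneg hcpos.le ha2nn]
      rw [← sub_le_iff_le_add', le_div_iff₀ (mul_pos hcm hlam)]
      linarith [hgoal]
    have hsec : c * h^2 / ((c-1)*lam) ≤ (1 + 1 / (2 * c0)) * (4 * c / ((c - 1) * lam)) * h ^ 2 := by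
      have hr : (1 + 1 / (2 * c0)) * (4 * c / ((c - 1) * lam)) * h ^ 2
          = (1 + 1 / (2 * c0)) * 4 * (c * h^2 / ((c-1)*lam)) := by ring
      have hq0 : 0 ≤ c * h^2 / ((c-1)*lam) :=
        div_nonneg (mul_nonneg hcpos.le hh2) (mul_nonneg hcm.le hlam.le)
      have h14 : (1:ℝ) ≤ (1 + 1 / (2 * c0)) * 4 := by
        have hx : 0 < 1 / (2*c0) := by
          apply div_pos one_pos; linarith
        linarith
      rw [hr]
      calc c * h^2 / ((c-1)*lam) = 1 * (c * h^2 / ((c-1)*lam)) := (one_mul _).symm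
      _ ≤ (1 + 1 / (2 * c0)) * 4 * (c * h^2 / ((c-1)*lam)) :=
        mul_le_mul_of_nonneg_right h14 hq0
    rw [hΩ]; linarith
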